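/- Let a, b, d, V_F, V_L, Ω_F, Ω_L be reals with a > 0, 0 < b ≤ π/2, d > a, 0 < V_F < 1, 0 < V_L < 1, Ω_F > 0, Ω_L > 0, and assume V_F ≥ V_L(1 + a·sin b/(d−a)) + 1 − cos b + a·b/(d−a), Ω_L ≤ (1−V_L)·sin b/(d+a), and (V_L·sin b + b)/(d−a) ≤ Ω_F. Then there exist reals k₁₁, k₂₂, k₂₃ such that for all q₁ ∈ [sin b/b − 1, 0], q₂ ∈ [(cos b − 1)/b, (1 − cos b)/b], q₃ ∈ [−a, a], q₄ ∈ [−a, a] the following hold: −k₁₁ + q₄k₂₂ + (b/a)q₄k₂₃ ≤ −(b/a)q₂ − V_L/a; −(d+q₃)k₂₂ − (b/a)(d+q₃)k₂₃ ≤ −(b/a)(1+q₁) − V_L·sin b/a; −k₁₁ + q₄k₂₂ − (b/a)q₄k₂₃ ≤ (b/a)q₂ − V_L/a; −(d+q₃)k₂₂ + (b/a)(d+q₃)k₂₃ ≤ (b/a)(1+q₁) − V_L·sin b/a; −(a/b)k₂₂ − k₂₃ ≤ −Ω_L/b; (a/b)k₂₂ − k₂₃ ≤ −Ω_L/b; −k₁₁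 − q₄k₂₂ + (b/a)q₄k₂₃ ≤ −(b/a)q₂ − V_L/a; −k₁₁ − q₄k₂₂ − (b/a)q₄k₂₃ ≤ (b/a)q₂ − V_L/a; together with |k₁₁| ≤ V_F/a, k₂₂ + (b/a)k₂₃ ≤ Ω_F/a, k₂₂ − (b/a)k₂₃ ≤ Ω_F/a, k₂₂ − (b/a)k₂₃ ≥ −Ω_F/a, and k₂₂ + (b/a)k₂₃ ≥ −Ω_F/a. -/

import Mathlib

open Set Real

set_option maxHeartbeats 4000000 in
/-- Under the solvability conditions of the VMP, the polytope of feasible feedback gains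
`(k₁₁, k₂₂, k₂₃)`, defined by the positive `D`-invariance inequalities (parametrized by the
uncertainty vector `(q₁,q₂,q₃,q₄)`) together with the admissibility inequalities,
is nonempty. -/
theorem vmp_gain_polytope_nonempty (a b d VF VL ΩF ΩL : ℝ)
    (ha : 0 < a) (hb0 : 0 < b) (hb : b ≤ π / 2) (hd : a < d)
    (hVF0 : 0 < VF) (hVF1 : VF < 1) (hVL0 : 0 < VL) (hVL1 : VL < 1)
    (hΩF : 0 < ΩF) (hΩL : 0 < ΩL)
    (h1 : VF ≥ VL * (1 + a * Real.sin b / (d - a)) + 1 - Real.cos b + a * b / (d - a))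
    (h2 : ΩL ≤ (1 - VL) * Real.sin b / (d + a))
    (h3 : (VL * Real.sin b + b) / (d - a) ≤ ΩF) :
    ∃ k11 k22 k23 : ℝ,
      (∀ q1 q2 q3 q4 : ℝ,
        q1 ∈ Icc (Real.sin b / b - 1) 0 →
        q2 ∈ Icc ((Real.cos b - 1) / b) ((1 - Real.cos b) / b) →
        q3 ∈ Icc (-a) a → q4 ∈ Icc (-a) a →
        (-k11 + q4 * k22 + (b / a) * q4 * k23 ≤ -(b / a) * q2 - VL / a ∧
         -(d + q3) * k22 - (b / a) * (d + q3) * k23 ≤ -(b / a) * (1 + q1)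
            - VL * Real.sin b / a ∧
         -k11 + q4 * k22 - (b / a) * q4 * k23 ≤ (b / a) * q2 - VL / a ∧
         -(d + q3) * k22 + (b / a) * (d + q3) * k23 ≤ (b / a) * (1 + q1)
            - VL * Real.sin b / a ∧
         -(a / b) * k22 - k23 ≤ -ΩL / b ∧
         (a / b) * k22 - k23 ≤ -ΩL / b ∧
         -k11 - q4 * k22 + (b / a) * q4 * k23 ≤ -(b / a) * q2 - VL / a ∧
         -k11 - q4 * k22 - (b / a) * q4 * k23 ≤ (b / a) * q2 - VL / a)) ∧
      |k11| ≤ VF / a ∧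
      k22 + (b / a) * k23 ≤ ΩF / a ∧
      k22 - (b / a) * k23 ≤ ΩF / a ∧
      k22 - (b / a) * k23 ≥ -(ΩF / a) ∧
      k22 + (b / a) * k23 ≥ -(ΩF / a) := by
  have hane : a ≠ 0 := ne_of_gt ha
  have hbne : b ≠ 0 := ne_of_gt hb0
  have hda : (0:ℝ) < d - a := by linarith
  have hda' : (0:ℝ) < d + a := by linarith
  have hsb : 0 < Real.sin b := Real.sin_pos_of_pos_of_lt_pi hb0 (by linarith [Real.pi_pos])
  have hsble : Real.sin b ≤ b := Real.sin_le hb0.le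
  have hcle : Real.cos b ≤ 1 := Real.cos_le_one b
  obtain ⟨s, hs⟩ : ∃ x : ℝ, x = Real.sin b := ⟨_, rfl⟩
  obtain ⟨c, hc⟩ : ∃ x : ℝ, x = Real.cos b := ⟨_, rfl⟩
  rw [← hs] at hsb hsble h1 h2 h3 ⊢
  rw [← hc] at hcle h1 ⊢
  obtain ⟨X0, hX0def⟩ : ∃ x : ℝ, x = (b + VL * s) / (a * (d - a)) := ⟨_, rfl⟩
  obtain ⟨Y0, hY0def⟩ : ∃ x : ℝ, x = (1 - VL) * s / (a * (d + a)) := ⟨_, rfl⟩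
  have hX0pos : 0 < X0 := hX0def ▸ div_pos (by nlinarith) (by positivity)
  have hY0pos : 0 < Y0 := hY0def ▸ div_pos (by nlinarith) (by positivity)
  have hdX : (d - a) * X0 = (b + VL * s) / a := by
    rw [hX0def]; field_simp
  have hdY : (d + a) * Y0 = (1 - VL) * s / a := by
    rw [hY0def]; field_simp
  have haX : a * X0 = (b + VL * s) / (d - a) := by
    rw [hX0def]; field_simp
  have haY : a * Y0 = (1 - VL) * s / (d + a) := by
    rw [hY0def]; field_simp
  have hYX : Y0 ≤ X0 := by
    rw [hX0def, hY0def]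
    exact div_le_div₀ (by nlinarith) (by nlinarith) (by positivity) (by nlinarith)
  have hΩLY : ΩL ≤ a * Y0 := by rw [haY]; exact h2
  have haYX : a * Y0 ≤ a * X0 := mul_le_mul_of_nonneg_left hYX ha.le
  have hΩLX : ΩL ≤ a * X0 := le_trans hΩLY haYX
  have hXΩF : a * X0 ≤ ΩF := by rw [haX, add_comm b (VL * s)]; exact h3
  -- identities relating the gains to X0, Y0
  have eA : ∀ q4 : ℝ, b / a * q4 * (a / (2 * b) * (X0 + Y0)) = q4 * X0 / 2 + q4 * Y0 / 2 := by
    intro q4; field_simp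
  have eX : (X0 - Y0) / 2 + b / a * (a / (2 * b) * (X0 + Y0)) = X0 := by
    field_simp; ring
  have eY : (X0 - Y0) / 2 - b / a * (a / (2 * b) * (X0 + Y0)) = -Y0 := by
    field_simp; ring
  have eV : -(a / b) * ((X0 - Y0) / 2) - a / (2 * b) * (X0 + Y0) = -(a * X0 / b) := by
    field_simp; ring
  have eW : a / b * ((X0 - Y0) / 2) - a / (2 * b) * (X0 + Y0) = -(a * Y0 / b) := by
    field_simp; ring
  have hVb : ΩL / b ≤ a * X0 / b := (div_le_div_iff_of_pos_right hb0).mpr hΩLX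
  have hWb : ΩL / b ≤ a * Y0 / b := (div_le_div_iff_of_pos_right hb0).mpr hΩLY
  have hX0F : X0 ≤ ΩF / a := by rw [le_div_iff₀ ha]; linarith [hXΩF]
  have hΩFa : 0 < ΩF / a := div_pos hΩF ha
  refine ⟨(1 - c + VL) / a + a * X0, (X0 - Y0) / 2, a / (2 * b) * (X0 + Y0),
    ?_, ?_, ?_, ?_, ?_, ?_⟩
  · rintro q1 q2 q3 q4 ⟨hq1l, hq1r⟩ ⟨hq2l, hq2r⟩ ⟨hq3l, hq3r⟩ ⟨hq4l, hq4r⟩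
    have hq2a : q2 * b ≤ 1 - c := (le_div_iff₀ hb0).mp hq2r
    have hq2b : c - 1 ≤ q2 * b := (div_le_iff₀ hb0).mp hq2l
    have hq1a : s ≤ (1 + q1) * b := by
      have : s / b ≤ 1 + q1 := by linarith
      linarith [(div_le_iff₀ hb0).mp this]
    have hq1b : b * (1 + q1) ≤ b := by nlinarith
    have hbq2u : b / a * q2 ≤ (1 - c) / a := by
      rw [div_mul_eq_mul_div]; exact (div_le_div_iff_of_pos_right ha).mpr (by linarith)
    have hbq2l : (c - 1) / a ≤ b / a * q2 := by
      rw [div_mul_eq_mul_div]; exact (div_le_div_iff_of_pos_right ha).mpr (by linarith)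
    have hbq1u : b / a * (1 + q1) ≤ b / a := by
      rw [div_mul_eq_mul_div]; exact (div_le_div_iff_of_pos_right ha).mpr (by linarith)
    have hbq1l : s / a ≤ b / a * (1 + q1) := by
      rw [div_mul_eq_mul_div]; exact (div_le_div_iff_of_pos_right ha).mpr (by linarith)
    have hq4X : q4 * X0 ≤ a * X0 := mul_le_mul_of_nonneg_right hq4r hX0pos.le
    have hq4X' : -a * X0 ≤ q4 * X0 := mul_le_mul_of_nonneg_right hq4l hX0pos.le
    have hq4Y : q4 * Y0 ≤ a * Y0 := mul_le_mul_of_nonneg_right hq4r hY0pos.le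
    have hq4Y' : -a * Y0 ≤ q4 * Y0 := mul_le_mul_of_nonneg_right hq4l hY0pos.le
    have hq3X : 0 ≤ (q3 + a) * X0 := mul_nonneg (by linarith) hX0pos.le
    have hq3Y : 0 ≤ (a - q3) * Y0 := mul_nonneg (by linarith) hY0pos.le
    have eB : b / a * (d + q3) * (a / (2 * b) * (X0 + Y0))
        = (d + q3) * X0 / 2 + (d + q3) * Y0 / 2 := by field_simp
    have hE1 : (1 - c + VL) / a = (1 - c) / a + VL / a := add_div _ _ _
    have hE2 : -((1 - c) / a) = (c - 1) / a := by rw [← neg_div, neg_sub]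
    have hE3 : (b + VL * s) / a = b / a + VL * s / a := add_div _ _ _
    have hE4 : (1 - VL) * s / a = s / a - VL * s / a := by ring
    refine ⟨?_, ?_, ?_, ?_, ?_, ?_, ?_, ?_⟩
    · linarith [eA q4, hq4X, hbq2u, hE1]
    · linarith [eB, hq3X, hdX, hE3, hbq1u]
    · linarith [eA q4, hq4Y', haYX, hbq2l, hE1, hE2]
    · linarith [eB, hq3Y, hdY, hE4, hbq1l]
    · have hE5 : -ΩL / b = -(ΩL / b) := by ring
      linarith [eV, hVb, hE5]
    · have hE5 : -ΩL / b = -(ΩL / b) := by ring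
      linarith [eW, hWb, hE5]
    · linarith [eA q4, hq4Y, haYX, hbq2u, hE1]
    · linarith [eA q4, hq4X', hbq2l, hE1, hE2]
  · rw [abs_le]
    constructor
    · have h0 : 0 ≤ (1 - c + VL) / a := div_nonneg (by linarith) ha.le
      have : 0 < VF / a := div_pos hVF0 ha
      nlinarith [hX0pos]
    · have h1' := (div_le_div_iff_of_pos_right ha).mpr h1
      have he : (1 - c + VL) / a + (b + VL * s) / (d - a)
          = (VL * (1 + a * s / (d - a)) + 1 - c + a * b / (d - a)) / a := by
        field_simp; ring
      linarith [haX, h1', he]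
  · linarith [eX, hX0F]
  · linarith [eY, hY0pos, hΩFa]
  · have : Y0 ≤ ΩF / a := le_trans hYX hX0F
    linarith [eY]
  · linarith [eX, hX0pos, hΩFa]
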